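/- Let L : (-∞, 0) → ℝ be locally Lipschitz and suppose L attains its supremum over (-∞, 0) at some point t₁ ∈ (-∞, 0). Then for every ε > 0 there exists t₀ ∈ (-∞, 0) such that L is differentiable at t₀, L'(t₀) ≥ 0, and |L(t₀) - L(t₁)| < ε. -/

import Mathlib

open MeasureTheory Set Filter

lemma key_lipschitz_deriv_nonneg {K : NNReal} {g : ℝ → ℝ} (hg : LipschitzWith K g)
    {a b : ℝ} (hab : a < b) (hba : g a ≤ g b) :
    ∃ t ∈ Set.Ioo a b, DifferentiableAt ℝ g t ∧ 0 ≤ deriv g t := by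
  by_contra hcon
  push_neg at hcon
  -- hcon : ∀ t ∈ Ioo a b, DifferentiableAt ℝ g t → deriv g t < 0
  set h : ℝ → ℝ := fun x => (K : ℝ) * x - g x with hh
  have hmono : Monotone h := by
    intro x y hxy
    have hd := hg.dist_le_mul x y
    rw [Real.dist_eq, Real.dist_eq] at hd
    have hlow := (abs_le.1 hd).1
    have habs : |x - y| = y - x := by rw [abs_sub_comm, abs_of_nonneg (by linarith)]
    rw [habs] at hlow
    show (K : ℝ) * x - g x ≤ (K : ℝ) * y - g y
    linarith
  have hcont : Continuous h := by
    have : Continuous g := hg.continuous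
    continuity
  have hSF : ∀ x, hmono.stieltjesFunction x = h x := by
    intro x
    rw [hmono.stieltjesFunction_eq]
    exact rightLim_eq_of_tendsto
      ((hcont.tendsto x).mono_left nhdsWithin_le_nhds)
  set μ := hmono.stieltjesFunction.measure with hμ
  have hderiv_bound : ∀ x, |deriv g x| ≤ (K : ℝ) := by
    intro x
    by_cases hd : DifferentiableAt ℝ g x
    · have h1 : ‖fderiv ℝ g x‖ ≤ (K : ℝ) := norm_fderiv_le_of_lipschitz ℝ hg
      have h2 : deriv g x = fderiv ℝ g x 1 := rfl
      calc |deriv g x| = ‖fderiv ℝ g x 1‖ := by rw [h2]; exact (Real.norm_eq_abs _).symm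
        _ ≤ ‖fderiv ℝ g x‖ * ‖(1:ℝ)‖ := (fderiv ℝ g x).le_opNorm 1
        _ ≤ (K : ℝ) := by simpa using h1
    · rw [deriv_zero_of_not_differentiableAt hd]; simpa using K.2
  -- a.e. relation between rnDeriv and deriv g
  have ae_eq : ∀ᵐ x, DifferentiableAt ℝ g x →
      μ.rnDeriv volume x = ENNReal.ofReal ((K : ℝ) - deriv g x) := by
    filter_upwards [hmono.ae_hasDerivAt, Measure.rnDeriv_lt_top μ volume] with x hx hlt hdiff
    have hKx : HasDerivAt (fun y : ℝ => (K : ℝ) * y) (K : ℝ) x := by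
      simpa using (hasDerivAt_id x).const_mul (K : ℝ)
    have hhx : HasDerivAt h ((K : ℝ) - deriv g x) x := hKx.sub hdiff.hasDerivAt
    have huniq : (μ.rnDeriv volume x).toReal = (K : ℝ) - deriv g x := hx.unique hhx
    rw [← huniq, ENNReal.ofReal_toReal hlt.ne]
  have haeIoo : ∀ᵐ x ∂(volume.restrict (Ioo a b)),
      μ.rnDeriv volume x = ENNReal.ofReal ((K : ℝ) - deriv g x) ∧ 0 < - deriv g x := by
    have h1 := ae_restrict_of_ae (μ := volume) (s := Ioo a b) ae_eq
    have h2 := ae_restrict_of_ae (μ := volume) (s := Ioo a b) hg.ae_differentiableAt_real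
    have h3 := ae_restrict_mem (μ := volume) (measurableSet_Ioo (a := a) (b := b))
    filter_upwards [h1, h2, h3] with x hx1 hx2 hx3
    exact ⟨hx1 hx2, by linarith [hcon x hx3 hx2]⟩
  -- upper bound on the lintegral
  have hIoo_lint : ∫⁻ x in Ioo a b, ENNReal.ofReal ((K : ℝ) - deriv g x)
      ≤ ENNReal.ofReal ((K : ℝ) * (b - a)) := by
    calc ∫⁻ x in Ioo a b, ENNReal.ofReal ((K : ℝ) - deriv g x)
        = ∫⁻ x in Ioo a b, μ.rnDeriv volume x :=
          lintegral_congr_ae (haeIoo.mono fun x hx => hx.1.symm)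
      _ ≤ μ (Ioo a b) := Measure.setLIntegral_rnDeriv_le _
      _ ≤ μ (Ioc a b) := measure_mono Ioo_subset_Ioc_self
      _ = ENNReal.ofReal (h b - h a) := by
          rw [hμ, StieltjesFunction.measure_Ioc, hSF, hSF]
      _ ≤ ENNReal.ofReal ((K : ℝ) * (b - a)) := by
          apply ENNReal.ofReal_le_ofReal
          simp only [hh]; nlinarith
  -- pass to real integrals
  set D : ℝ → ℝ := fun x => (K : ℝ) - deriv g x with hD
  have hmeasD : AEStronglyMeasurable D (volume.restrict (Ioo a b)) :=
    (measurable_const.sub (measurable_deriv g)).aestronglyMeasurable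
  have hDnonneg : 0 ≤ᵐ[volume.restrict (Ioo a b)] D := by
    filter_upwards [haeIoo] with x hx
    simp only [hD, Pi.zero_apply]; linarith [hx.2, NNReal.coe_nonneg K]
  have hintD : IntegrableOn D (Ioo a b) volume := by
    refine Integrable.mono' (integrable_const (2 * (K : ℝ))) hmeasD ?_
    refine Eventually.of_forall fun x => ?_
    have := hderiv_bound x
    rw [Real.norm_eq_abs]
    simp only [hD]
    cases abs_le.1 this with
    | intro h1 h2 => rw [abs_le]; constructor <;> nlinarith [NNReal.coe_nonneg K]
  have hreal : ∫ x in Ioo a b, D x ≤ (K : ℝ) * (b - a) := by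
    rw [integral_eq_lintegral_of_nonneg_ae hDnonneg hmeasD]
    calc (∫⁻ x in Ioo a b, ENNReal.ofReal (D x)).toReal
        ≤ (ENNReal.ofReal ((K : ℝ) * (b - a))).toReal := by
          apply ENNReal.toReal_mono ENNReal.ofReal_ne_top hIoo_lint
      _ = (K : ℝ) * (b - a) := ENNReal.toReal_ofReal (mul_nonneg (NNReal.coe_nonneg K) (by linarith))
  -- split the integral
  have hintderiv : IntegrableOn (deriv g) (Ioo a b) volume := by
    refine Integrable.mono' (integrable_const (K : ℝ))
      ((measurable_deriv g).aestronglyMeasurable) ?_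
    exact Eventually.of_forall fun x => by rw [Real.norm_eq_abs]; exact hderiv_bound x
  have hsplit : ∫ x in Ioo a b, D x = (K : ℝ) * (b - a) - ∫ x in Ioo a b, deriv g x := by
    rw [integral_sub ((integrableOn_const (C := (K : ℝ)) (s := Ioo a b) (μ := volume) (by simp [hab]) : IntegrableOn (fun _ => (K : ℝ)) (Ioo a b) volume)) hintderiv]
    congr 1
    rw [setIntegral_const]
    simp [Real.volume_Ioo, ENNReal.toReal_ofReal (by linarith : (0:ℝ) ≤ b - a), max_eq_left (by linarith : (0:ℝ) ≤ b - a), mul_comm]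
  have hderiv_int_nonneg : 0 ≤ ∫ x in Ioo a b, deriv g x := by linarith [hsplit ▸ hreal]
  -- but -deriv g is a.e. positive on Ioo a b, so its integral is positive
  have hpos : 0 < ∫ x in Ioo a b, (- deriv g) x := by
    rw [setIntegral_pos_iff_support_of_nonneg_ae
      (by filter_upwards [haeIoo] with x hx; simp only [Pi.neg_apply, Pi.zero_apply]
          linarith [hx.2]) hintderiv.neg]
    have hae2 : ∀ᵐ x, x ∈ Ioo a b → 0 < - deriv g x :=
      ae_imp_of_ae_restrict (haeIoo.mono fun x hx => hx.2)
    set Nset : Set ℝ := {x | ¬ (x ∈ Ioo a b → 0 < - deriv g x)} with hNset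
    have hN : volume Nset = 0 := hae2
    have hvol : volume (Ioo a b \ Nset) = volume (Ioo a b) := measure_diff_null hN
    have hsub2 : Ioo a b \ Nset ⊆ Function.support (- deriv g) ∩ Ioo a b := by
      rintro x ⟨hx1, hx2⟩
      simp only [hNset, mem_setOf_eq, not_not] at hx2
      have := hx2 hx1
      exact ⟨by simp only [Function.mem_support, Pi.neg_apply]; exact ne_of_gt this, hx1⟩
    calc (0 : ENNReal) < volume (Ioo a b) := by
          rw [Real.volume_Ioo]; exact ENNReal.ofReal_pos.2 (by linarith)
      _ = volume (Ioo a b \ Nset) := hvol.symm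
      _ ≤ volume (Function.support (- deriv g) ∩ Ioo a b) := measure_mono hsub2
  have hpos' : 0 < ∫ x in Ioo a b, - deriv g x := by
    simpa using hpos
  rw [integral_neg] at hpos'
  linarith

/-- `f` is locally Lipschitz on the set `s`: every point of `s` has a neighborhood
within `s` on which `f` is Lipschitz. -/
def LocallyLipschitzOnSet (f : ℝ → ℝ) (s : Set ℝ) : Prop :=
  ∀ x ∈ s, ∃ K : NNReal, ∃ u ∈ nhdsWithin x s, LipschitzOnWith K f u

/-- Let `L : (-∞, 0) → ℝ` be locally Lipschitz and suppose `L` attains its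
supremum over `(-∞, 0)` at some `t₁ ∈ (-∞, 0)`. Then for every `ε > 0` there exists
`t₀ ∈ (-∞, 0)` such that `L` is differentiable at `t₀`, `L'(t₀) ≥ 0`, and `|L(t₀) - L(t₁)| < ε`. -/
theorem stmt2 (L : ℝ → ℝ)
    (hlip : LocallyLipschitzOnSet L (Set.Iio (0 : ℝ)))
    (t₁ : ℝ) (ht₁ : t₁ ∈ Set.Iio (0 : ℝ))
    (hmax : ∀ t ∈ Set.Iio (0 : ℝ), L t ≤ L t₁)
    (ε : ℝ) (hε : 0 < ε) :
    ∃ t₀ ∈ Set.Iio (0 : ℝ), DifferentiableAt ℝ L t₀ ∧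
      0 ≤ deriv L t₀ ∧ |L t₀ - L t₁| < ε := by
  obtain ⟨K, u, hu, hK⟩ := hlip t₁ ht₁
  rw [isOpen_Iio.nhdsWithin_eq ht₁] at hu
  have hmem : u ∩ Set.Iio 0 ∈ nhds t₁ := Filter.inter_mem hu (isOpen_Iio.mem_nhds ht₁)
  obtain ⟨δ₀, hδ₀, hball⟩ := Metric.mem_nhds_iff.1 hmem
  set δ := min (δ₀ / 2) (ε / (2 * ((K : ℝ) + 1))) with hδdef
  have hδpos : 0 < δ := lt_min (by linarith) (div_pos hε (by positivity))
  set a := t₁ - δ with ha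
  have hsub : Set.Icc a t₁ ⊆ u ∩ Set.Iio 0 := by
    intro x hx
    apply hball
    rw [Metric.mem_ball, Real.dist_eq, abs_lt]
    have h1 := hx.1; have h2 := hx.2
    have hδle : δ ≤ δ₀ / 2 := min_le_left _ _
    constructor <;> simp only [ha] at h1 <;> linarith
  have hlipIcc : LipschitzOnWith K L (Set.Icc a t₁) := hK.mono fun x hx => (hsub hx).1
  obtain ⟨g, hgl, hgeq⟩ := hlipIcc.extend_real
  have haIcc : a ∈ Set.Icc a t₁ := ⟨le_refl _, by simp only [ha]; linarith⟩
  have ht₁Icc : t₁ ∈ Set.Icc a t₁ := ⟨by simp only [ha]; linarith, le_refl _⟩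
  have hga : g a ≤ g t₁ := by
    rw [← hgeq haIcc, ← hgeq ht₁Icc]
    exact hmax a (hsub haIcc).2
  obtain ⟨t₀, ht₀mem, hdiffg, hderivg⟩ :=
    key_lipschitz_deriv_nonneg hgl (by simp only [ha]; linarith : a < t₁) hga
  have hIooIcc : Set.Ioo a t₁ ⊆ Set.Icc a t₁ := Set.Ioo_subset_Icc_self
  have hLg : L =ᶠ[nhds t₀] g := by
    filter_upwards [isOpen_Ioo.mem_nhds ht₀mem] with x hx
    exact hgeq (hIooIcc hx)
  refine ⟨t₀, (hsub (hIooIcc ht₀mem)).2, ?_, ?_, ?_⟩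
  · exact hLg.differentiableAt_iff.2 hdiffg
  · rw [hLg.deriv_eq]; exact hderivg
  · have hd : dist (L t₀) (L t₁) ≤ (K : ℝ) * dist t₀ t₁ :=
      hlipIcc.dist_le_mul t₀ (hIooIcc ht₀mem) t₁ ht₁Icc
    rw [Real.dist_eq, Real.dist_eq] at hd
    have h1 : |t₀ - t₁| ≤ δ := by
      rw [abs_le]
      have := ht₀mem.1; have := ht₀mem.2
      constructor <;> simp only [ha] at * <;> linarith
    have h2 : δ ≤ ε / (2 * ((K : ℝ) + 1)) := min_le_right _ _
    have hK0 := NNReal.coe_nonneg K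
    have h3 : (K : ℝ) * |t₀ - t₁| ≤ (K : ℝ) * δ := mul_le_mul_of_nonneg_left h1 hK0
    have h4 : (K : ℝ) * δ ≤ (K : ℝ) * (ε / (2 * ((K : ℝ) + 1))) :=
      mul_le_mul_of_nonneg_left h2 hK0
    have h5 : (K : ℝ) * (ε / (2 * ((K : ℝ) + 1))) < ε := by
      rw [mul_div_assoc', div_lt_iff₀ (by positivity)]
      nlinarith
    linarith
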